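/- Let n ≥ 1 be odd and let 0 ≤ θ_0 < θ_1 < ... < θ_{n-1} < 2π be real nodes. Define β_i(θ) = ((−1)^i Π_{k≠i} sin((θ − θ_k)/2)) / (Σ_{j=0}^{n-1} (−1)^j Π_{k≠j} sin((θ − θ_k)/2)) and the trigonometric Hermite basis b_{i,j}(θ) = (2^j/j!) sin^j((θ − θ_i)/2) · β_i(θ)^{j+1}. Then for all i, ℓ ∈ {0,...,n-1} and all j, k ∈ ℕ: the k-th iterated derivative of b_{i,j} at θ_ℓ equals 0 whenever k < j, and the j-th iterated derivative of b_{i,j} at θ_ℓ equals δ_{iℓ}. -/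

import Mathlib

open scoped BigOperators
open scoped ContDiff

/-- The pole-free form of Berrut's trigonometric basis function for odd `n`. -/
noncomputable def berrutBasisOdd (n : ℕ) (θ : Fin n → ℝ) (i : Fin n) (t : ℝ) : ℝ :=
  ((-1 : ℝ) ^ (i : ℕ) * ∏ k ∈ Finset.univ.erase i, Real.sin ((t - θ k) / 2)) /
    (∑ j : Fin n, (-1 : ℝ) ^ (j : ℕ) *
      ∏ k ∈ Finset.univ.erase j, Real.sin ((t - θ k) / 2))

/-- The trigonometric Hermite basis `b_{i,j}(θ) = (2^j/j!) sin^j((θ−θ_i)/2) β_i(θ)^(j+1)`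
for odd `n`. -/
noncomputable def trigHermiteBasisOdd (n : ℕ) (θ : Fin n → ℝ) (i : Fin n) (j : ℕ)
    (t : ℝ) : ℝ :=
  ((2 : ℝ) ^ j / (Nat.factorial j : ℝ)) * Real.sin ((t - θ i) / 2) ^ j *
    berrutBasisOdd n θ i t ^ (j + 1)

/-- auxiliary: the common denominator. -/
noncomputable def Dden (n : ℕ) (θ : Fin n → ℝ) (t : ℝ) : ℝ :=
  ∑ j : Fin n, (-1 : ℝ) ^ (j : ℕ) *
    ∏ k ∈ Finset.univ.erase j, Real.sin ((t - θ k) / 2)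

lemma berrut_eq (n : ℕ) (θ : Fin n → ℝ) (i : Fin n) (t : ℝ) :
    berrutBasisOdd n θ i t =
      ((-1 : ℝ) ^ (i : ℕ) * ∏ k ∈ Finset.univ.erase i, Real.sin ((t - θ k) / 2)) /
        Dden n θ t := rfl

lemma key_vanish (s : ℝ → ℝ) (hs : ContDiff ℝ ∞ s) (a : ℝ) (hsa : s a = 0)
    (U : Set ℝ) (hU : IsOpen U) (haU : a ∈ U) :
    ∀ (m : ℕ) (g : ℝ → ℝ), ContDiffOn ℝ ∞ g U →
      (∀ k < m, iteratedDeriv k (fun t => s t ^ m * g t) a = 0) ∧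
      iteratedDeriv m (fun t => s t ^ m * g t) a
        = (m.factorial : ℝ) * (deriv s a) ^ m * g a := by
  intro m
  induction m with
  | zero =>
    intro g hg
    refine ⟨fun k hk => absurd hk (Nat.not_lt_zero k), ?_⟩
    simp [iteratedDeriv_zero]
  | succ m ih =>
    intro g hg
    set g₁ : ℝ → ℝ := fun t => ((m : ℝ) + 1) * deriv s t * g t + s t * deriv g t with hg₁def
    have hsd : ContDiff ℝ ∞ (deriv s) := (contDiff_infty_iff_deriv.mp hs).2
    have hgd : ContDiffOn ℝ ∞ (deriv g) U := hg.deriv_of_isOpen hU (by exact_mod_cast le_top)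
    have hg₁ : ContDiffOn ℝ ∞ g₁ U :=
      (((contDiff_const.mul hsd).contDiffOn).mul hg).add ((hs.contDiffOn).mul hgd)
    have hderiv : ∀ t ∈ U, deriv (fun t => s t ^ (m + 1) * g t) t = s t ^ m * g₁ t := by
      intro t ht
      have hds : HasDerivAt s (deriv s t) t :=
        ((hs.differentiable (by simp)) t).hasDerivAt
      have hdg : HasDerivAt g (deriv g t) t :=
        ((hg.contDiffAt (hU.mem_nhds ht)).differentiableAt (by simp)).hasDerivAt
      have h1 : HasDerivAt (fun t => s t ^ (m + 1) * g t)
          (((m + 1 : ℕ) : ℝ) * s t ^ m * deriv s t * g t + s t ^ (m + 1) * deriv g t) t := by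
        exact ((hds.pow (m + 1)).mul hdg).congr_deriv (by push_cast [Nat.add_sub_cancel, Pi.pow_apply]; ring)
      rw [h1.deriv]
      simp only [hg₁def]
      push_cast
      ring
    have hev : deriv (fun t => s t ^ (m + 1) * g t) =ᶠ[nhds a] fun t => s t ^ m * g₁ t :=
      Filter.eventuallyEq_of_mem (hU.mem_nhds haU) hderiv
    have hred : ∀ k : ℕ, iteratedDeriv (k + 1) (fun t => s t ^ (m + 1) * g t) a
        = iteratedDeriv k (fun t => s t ^ m * g₁ t) a := by
      intro k
      rw [iteratedDeriv_succ']
      exact hev.iteratedDeriv_eq k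
    constructor
    · intro k hk
      match k with
      | 0 => simp [iteratedDeriv_zero, hsa]
      | k + 1 =>
        rw [hred k]
        exact (ih g₁ hg₁).1 k (by omega)
    · rw [hred m, (ih g₁ hg₁).2]
      simp only [hg₁def, hsa, zero_mul, add_zero, Nat.factorial_succ]
      push_cast
      ring

/-- for odd `n`, the trigonometric Hermite basis satisfies
`b_{i,j}^{(k)}(θ_ℓ) = 0` for `k < j` and `b_{i,j}^{(j)}(θ_ℓ) = δ_{iℓ}`. -/
theorem trigHermiteBasisOdd_property
    (n : ℕ) (hn : 1 ≤ n) (hodd : Odd n)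
    (θ : Fin n → ℝ) (hθ : StrictMono θ)
    (hθ0 : ∀ k, 0 ≤ θ k) (hθ2π : ∀ k, θ k < 2 * Real.pi) :
    ∀ (i ℓ : Fin n) (j k : ℕ),
      (k < j → iteratedDeriv k (trigHermiteBasisOdd n θ i j) (θ ℓ) = 0) ∧
      iteratedDeriv j (trigHermiteBasisOdd n θ i j) (θ ℓ)
        = if i = ℓ then 1 else 0 := by
  classical
  -- basic smoothness facts
  have hSsm : ∀ c : ℝ, ContDiff ℝ ∞ (fun t : ℝ => Real.sin ((t - c) / 2)) := by
    intro c
    exact Real.contDiff_sin.comp ((contDiff_id.sub contDiff_const).div_const 2)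
  have hPsm : ∀ (s : Finset (Fin n)),
      ContDiff ℝ ∞ (fun t => ∏ k ∈ s, Real.sin ((t - θ k) / 2)) :=
    fun s => contDiff_prod (fun k _ => hSsm (θ k))
  have hDsm : ContDiff ℝ ∞ (Dden n θ) :=
    ContDiff.sum (fun j _ => contDiff_const.mul (hPsm _))
  -- nonvanishing of the sines at node differences
  have hsin : ∀ l k : Fin n, k ≠ l → Real.sin ((θ l - θ k) / 2) ≠ 0 := by
    intro l k hkl h
    have hpi := Real.pi_pos
    have h1 : -Real.pi < (θ l - θ k) / 2 := by
      have := hθ0 l; have := hθ2π k; linarith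
    have h2 : (θ l - θ k) / 2 < Real.pi := by
      have := hθ0 k; have := hθ2π l; linarith
    have := (Real.sin_eq_zero_iff_of_lt_of_lt h1 h2).mp h
    exact hkl (hθ.injective (by linarith)).symm
  have hSnode : ∀ l : Fin n, Real.sin ((θ l - θ l) / 2) = 0 := by
    intro l; simp
  -- value of the denominator at a node
  have hDnode : ∀ l : Fin n, Dden n θ (θ l)
      = (-1 : ℝ) ^ (l : ℕ) * ∏ k ∈ Finset.univ.erase l, Real.sin ((θ l - θ k) / 2) := by
    intro l
    refine Finset.sum_eq_single_of_mem l (Finset.mem_univ l) ?_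
    intro b _ hbl
    have hlb : l ∈ Finset.univ.erase b := Finset.mem_erase.mpr ⟨fun h => hbl h.symm, Finset.mem_univ l⟩
    rw [Finset.prod_eq_zero hlb (hSnode l), mul_zero]
  have hDl : ∀ l : Fin n, Dden n θ (θ l) ≠ 0 := by
    intro l
    rw [hDnode l]
    refine mul_ne_zero (pow_ne_zero _ (by norm_num)) ?_
    rw [Finset.prod_ne_zero_iff]
    intro k hk
    exact hsin l k (Finset.mem_erase.mp hk).1
  -- the open set where the denominator is nonzero
  set U : Set ℝ := {t | Dden n θ t ≠ 0} with hUdef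
  have hU : IsOpen U := isOpen_compl_singleton.preimage hDsm.continuous
  intro i ℓ j k
  by_cases hil : i = ℓ
  · -- diagonal case
    subst hil
    set s : ℝ → ℝ := fun t => Real.sin ((t - θ i) / 2) with hsdef
    set g : ℝ → ℝ := fun t => ((2 : ℝ) ^ j / (Nat.factorial j : ℝ)) *
      berrutBasisOdd n θ i t ^ (j + 1) with hgdef
    have hfun : trigHermiteBasisOdd n θ i j = fun t => s t ^ j * g t := by
      funext t
      simp only [trigHermiteBasisOdd, hsdef, hgdef]
      ring
    have hg : ContDiffOn ℝ ∞ g U := by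
      apply ContDiffOn.mul contDiffOn_const
      apply ContDiffOn.pow
      have hnum : ContDiff ℝ ∞ (fun t => (-1 : ℝ) ^ (i : ℕ) *
          ∏ kk ∈ Finset.univ.erase i, Real.sin ((t - θ kk) / 2)) :=
        contDiff_const.mul (hPsm _)
      exact ContDiffOn.div hnum.contDiffOn hDsm.contDiffOn (fun t ht => ht)
    have hs0 : s (θ i) = 0 := hSnode i
    have hds : deriv s (θ i) = 1 / 2 := by
      have h1 : HasDerivAt (fun t : ℝ => (t - θ i) / 2) (1 / 2) (θ i) := by
        simpa using ((hasDerivAt_id (θ i)).sub_const (θ i)).div_const 2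
      have h2 : HasDerivAt s (Real.cos ((θ i - θ i) / 2) * (1 / 2)) (θ i) :=
        (Real.hasDerivAt_sin _).comp (θ i) h1
      rw [h2.deriv]
      simp
    have hmemU : θ i ∈ U := hDl i
    obtain ⟨hzero, hval⟩ := key_vanish s (hSsm (θ i)) (θ i) hs0 U hU hmemU j g hg
    constructor
    · intro hk
      rw [hfun]
      exact hzero k hk
    · rw [hfun, hval, if_pos rfl, hds]
      have hβ : berrutBasisOdd n θ i (θ i) = 1 := by
        rw [berrut_eq, hDnode i, div_self (by rw [← hDnode i]; exact hDl i)]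
      simp only [hgdef, hβ, one_pow, mul_one]
      have hfac : (Nat.factorial j : ℝ) ≠ 0 := Nat.cast_ne_zero.mpr j.factorial_ne_zero
      field_simp
      rw [← mul_pow]; norm_num
  · -- off-diagonal case
    have hlmem : ℓ ∈ Finset.univ.erase i := Finset.mem_erase.mpr ⟨fun h => hil h.symm, Finset.mem_univ ℓ⟩
    set s : ℝ → ℝ := fun t => Real.sin ((t - θ ℓ) / 2) with hsdef
    set g : ℝ → ℝ := fun t => ((2 : ℝ) ^ j / (Nat.factorial j : ℝ)) *
      Real.sin ((t - θ i) / 2) ^ j *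
      ((-1 : ℝ) ^ (i : ℕ) *
        ∏ kk ∈ (Finset.univ.erase i).erase ℓ, Real.sin ((t - θ kk) / 2)) ^ (j + 1) /
      Dden n θ t ^ (j + 1) with hgdef
    have hfun : trigHermiteBasisOdd n θ i j = fun t => s t ^ (j + 1) * g t := by
      funext t
      have hprod : ∏ kk ∈ Finset.univ.erase i, Real.sin ((t - θ kk) / 2)
          = Real.sin ((t - θ ℓ) / 2) *
            ∏ kk ∈ (Finset.univ.erase i).erase ℓ, Real.sin ((t - θ kk) / 2) :=
        (Finset.mul_prod_erase _ _ hlmem).symm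
      simp only [trigHermiteBasisOdd, berrut_eq, hsdef, hgdef, div_pow, hprod]
      ring
    have hg : ContDiffOn ℝ ∞ g U := by
      apply ContDiffOn.div
      · exact (((contDiff_const.mul ((hSsm (θ i)).pow j)).mul
          ((contDiff_const.mul (hPsm _)).pow (j + 1)))).contDiffOn
      · exact (hDsm.pow (j + 1)).contDiffOn
      · intro t ht; exact pow_ne_zero _ ht
    have hs0 : s (θ ℓ) = 0 := hSnode ℓ
    have hmemU : θ ℓ ∈ U := hDl ℓ
    obtain ⟨hzero, _⟩ := key_vanish s (hSsm (θ ℓ)) (θ ℓ) hs0 U hU hmemU (j + 1) g hg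
    constructor
    · intro hk
      rw [hfun]
      exact hzero k (by omega)
    · rw [hfun, if_neg hil]
      exact hzero j (by omega)
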